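/- Let G be a countable discrete group with measure-preserving actions on standard Borel probability spaces (X, μ) and (Y, ν₀), and let G act diagonally on (X × Y, μ ⊗ ν₀). Assume there exist a finite set S₀ ⊆ G and κ > 0 such that every ξ ∈ L²(G × X × Y, ν) satisfying, for every h ∈ G and ν₀-almost every y ∈ Y, ∫_X ξ(h, x, y) dμ(x) = 0, obeys max_{g∈S₀} ‖π(g)ξ − ξ‖₂ ≥ κ‖ξ‖₂, where (π(g)ξ)(h, x, y) := ξ(g⁻¹ h g, g⁻¹·x, g⁻¹·y). Then for every ε > 0 there exist a finite subset S ⊆ G and δ > 0 such that for every measurable map f : X × Y → G satisfying (μ⊗ν₀)({z : f(g·z) = g·f(z)·g⁻¹}) > 1 − δ for all g ∈ S, there exist a measurable subset Y' ⊆ Y, a finite measurable partition Y' = Y₁ ⊔ ⋯ ⊔ Y_m, and elements g₁, …, g_m ∈ G such that ν₀(Y') > 1 − ε and, for every i and almost every y ∈ Y_i, μ({x ∈ X : f(x, y) = g_i}) > 1 − ε. -/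

import Mathlib

open Filter Topology MeasureTheory
open scoped ENNReal

/-- The natural measure on `G × Z`: the product of the counting measure on the countable
discrete group `G` with the probability measure on `Z`. -/
noncomputable def nuG (G : Type*) {Z : Type*} [MeasurableSpace G] [MeasurableSpace Z]
    (ζ : Measure Z) : Measure (G × Z) :=
  (Measure.count : Measure G).prod ζ

set_option maxHeartbeats 1000000 in
/-- Let `G` be a countable group with measure-preserving actions on standard Borel
probability spaces `(X, μ)` and `(Y, ν₀)`, acting diagonally on `X × Y`.  Assume the
representation `(π(g)ξ)(h, x, y) = ξ(g⁻¹ h g, g⁻¹ • x, g⁻¹ • y)` on `L²(G × X × Y, ν)` has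
spectral gap relative to the subspace of `ξ` with `∫_X ξ(h, x, y) dμ(x) = 0` for all `h`
and almost every `y`.  Then for every `ε > 0` there are a finite `S ⊆ G` and `δ > 0` such
that every measurable `f : X × Y → G` which `δ`-almost commutes with every `g ∈ S`
(i.e. `(μ ⊗ ν₀) {z | f (g • z) = g * f z * g⁻¹} > 1 - δ`) is, over a set `Y' ⊆ Y` of
measure `> 1 - ε` partitioned into finitely many pieces `Y i`, within `ε` of the constant
`g i` in the `X`-direction over each piece. -/
theorem almost_constant_fibers_of_stable_spectral_gap
    {G : Type*} [Group G] [Countable G] [MeasurableSpace G] [MeasurableSingletonClass G]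
    {X Y : Type*} [MeasurableSpace X] [StandardBorelSpace X]
    [MeasurableSpace Y] [StandardBorelSpace Y]
    (μ : Measure X) [IsProbabilityMeasure μ] (ν₀ : Measure Y) [IsProbabilityMeasure ν₀]
    [MulAction G X] [MulAction G Y]
    (hmpX : ∀ g : G, MeasurePreserving (fun x : X => g • x) μ μ)
    (hmpY : ∀ g : G, MeasurePreserving (fun y : Y => g • y) ν₀ ν₀)
    (S₀ : Finset G) (κ : ℝ) (hκ : 0 < κ)
    (hgap : ∀ ξ : G × X × Y → ℝ, MemLp ξ 2 (nuG G (μ.prod ν₀)) →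
      (∀ h : G, ∀ᵐ y ∂ν₀, ∫ x, ξ (h, x, y) ∂μ = 0) →
      ∃ g ∈ S₀, ENNReal.ofReal κ * eLpNorm ξ 2 (nuG G (μ.prod ν₀)) ≤
        eLpNorm (fun p : G × X × Y => ξ (g⁻¹ * p.1 * g, g⁻¹ • p.2) - ξ p) 2
          (nuG G (μ.prod ν₀)))
    (ε : ℝ) (hε : 0 < ε) :
    ∃ (S : Finset G) (δ : ℝ), 0 < δ ∧
      ∀ f : X × Y → G, Measurable f →
        (∀ g ∈ S, 1 - δ < ((μ.prod ν₀) {z : X × Y | f (g • z) = g * f z * g⁻¹}).toReal) →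
        ∃ (Y' : Set Y) (m : ℕ) (Ys : Fin m → Set Y) (gs : Fin m → G),
          MeasurableSet Y' ∧ (∀ i, MeasurableSet (Ys i)) ∧
          (Pairwise fun i j => Disjoint (Ys i) (Ys j)) ∧
          (⋃ i, Ys i) = Y' ∧
          1 - ε < (ν₀ Y').toReal ∧
          ∀ i, ∀ᵐ y ∂ν₀, y ∈ Ys i →
            1 - ε < (μ {x : X | f (x, y) = gs i}).toReal := by
  classical
  set ε' : ℝ := min ε 4⁻¹ with hε'def
  have hε'pos : 0 < ε' := lt_min hε (by norm_num)
  have hε'le : ε' ≤ ε := min_le_left _ _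
  have hε'lt : ε' ≤ 4⁻¹ := min_le_right _ _
  set δ : ℝ := κ ^ 2 * ε' ^ 2 / 16 with hδdef
  have hδpos : 0 < δ := by positivity
  refine ⟨S₀, δ, hδpos, ?_⟩
  intro f hf hcomm
  set ν : Measure (G × X × Y) := nuG G (μ.prod ν₀) with hνdef
  -- every subset of `G` (and of `G × G`) is measurable
  have hGset : ∀ s : Set G, MeasurableSet s := fun s => s.to_countable.measurableSet
  have hGGset : ∀ s : Set (G × G), MeasurableSet s := fun s => s.to_countable.measurableSet
  -- slice measures
  set A : G → Y → ℝ≥0∞ := fun h y => μ {x | f (x, y) = h} with hAdef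
  have hslice : ∀ (h : G) (y : Y), MeasurableSet {x : X | f (x, y) = h} :=
    fun h y => (hf (measurableSet_singleton h)).preimage measurable_prodMk_right
  have hAmeas : ∀ h : G, Measurable (A h) :=
    fun h => measurable_measure_prodMk_right (hf (measurableSet_singleton h))
  have hAle : ∀ (h : G) (y : Y), A h y ≤ 1 := fun h y => prob_le_one
  have hAne : ∀ (h : G) (y : Y), A h y ≠ ∞ := fun h y => measure_ne_top μ _
  have hAsum : ∀ y : Y, ∑' h : G, A h y = 1 := by
    intro y
    have hdis : Pairwise (Function.onFun Disjoint fun h : G => {x : X | f (x, y) = h}) := by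
      intro h h' hne
      refine Set.disjoint_left.mpr fun x hx hx' => hne ?_
      exact hx.symm.trans hx'
    have hU : ⋃ h : G, {x : X | f (x, y) = h} = Set.univ := by
      ext x; simp
    rw [hAdef, ← measure_iUnion hdis (fun h => hslice h y), hU, measure_univ]
  -- the indicator of the graph of f
  set D : Set (G × X × Y) := {p | f p.2 = p.1} with hDdef
  have hDmeas : MeasurableSet D := by
    have : D = ⋃ h : G, ({h} : Set G) ×ˢ (f ⁻¹' {h}) := by
      ext ⟨h, z⟩
      constructor
      · intro hp
        exact Set.mem_iUnion.mpr ⟨h, ⟨rfl, hp⟩⟩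
      · intro hp
        obtain ⟨h', hh', hz⟩ := Set.mem_iUnion.mp hp
        have h1 : h = h' := hh'
        have h2 : f z = h' := hz
        exact h2.trans h1.symm
    rw [this]
    exact MeasurableSet.iUnion fun h =>
      (measurableSet_singleton h).prod (hf (measurableSet_singleton h))
  set ξ : G × X × Y → ℝ := D.indicator (fun _ => (1 : ℝ)) with hξdef
  have hξmeas : Measurable ξ := measurable_const.indicator hDmeas
  set η : G × X × Y → ℝ := fun p => (A p.1 p.2.2).toReal with hηdef
  have hηmeas : Measurable η := by
    have h1 : Measurable fun q : (X × Y) × G => (A q.2 q.1.2).toReal :=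
      measurable_from_prod_countable_left fun h =>
        ((hAmeas h).comp measurable_snd).ennreal_toReal
    exact h1.comp measurable_swap
  set ζ : G × X × Y → ℝ := fun p => ξ p - η p with hζdef
  have hζmeas : Measurable ζ := hξmeas.sub hηmeas
  -- squared nnnorm as ofReal
  have hsq : ∀ r : ℝ, ((‖r‖₊ : ℝ≥0∞)) ^ 2 = ENNReal.ofReal (r ^ 2) := by
    intro r
    rw [← ENNReal.coe_pow, ← nnnorm_pow, ← enorm_eq_nnnorm, Real.enorm_eq_ofReal (by positivity)]
  have heLp : ∀ φ : G × X × Y → ℝ,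
      eLpNorm φ 2 ν = (∫⁻ p, ((‖φ p‖₊ : ℝ≥0∞)) ^ 2 ∂ν) ^ (1 / 2 : ℝ) := by
    intro φ
    rw [eLpNorm_eq_lintegral_rpow_enorm_toReal (by norm_num) (by norm_num)]
    simp_rw [enorm_eq_nnnorm]
    simp_rw [ENNReal.toReal_ofNat, show ((2 : ℝ)) = ((2 : ℕ) : ℝ) by norm_num,
      ENNReal.rpow_natCast]
  have hNsplit2 : ∀ φ : G × X × Y → ℝ, Measurable φ →
      (∫⁻ p, ((‖φ p‖₊ : ℝ≥0∞)) ^ 2 ∂ν) =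
        ∑' h : G, ∫⁻ z, ((‖φ (h, z)‖₊ : ℝ≥0∞)) ^ 2 ∂(μ.prod ν₀) := by
    intro φ hφ
    have hm : Measurable fun p : G × X × Y => ((‖φ p‖₊ : ℝ≥0∞)) ^ 2 :=
      (hφ.nnnorm.coe_nnreal_ennreal).pow_const 2
    rw [hνdef, show nuG G (μ.prod ν₀) = (Measure.count : Measure G).prod (μ.prod ν₀) from rfl,
      MeasureTheory.lintegral_prod _ hm.aemeasurable, lintegral_count]
  have hNsplit : ∀ φ : G × X × Y → ℝ, Measurable φ →
      (∫⁻ p, ((‖φ p‖₊ : ℝ≥0∞)) ^ 2 ∂ν) =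
        ∑' h : G, ∫⁻ y, ∫⁻ x, ((‖φ (h, x, y)‖₊ : ℝ≥0∞)) ^ 2 ∂μ ∂ν₀ := by
    intro φ hφ
    rw [hNsplit2 φ hφ]
    congr 1; funext h
    exact MeasureTheory.lintegral_prod_symm _
      (((hφ.nnnorm.coe_nnreal_ennreal).pow_const 2).comp measurable_prodMk_left).aemeasurable
  -- slice description of ξ
  have hξslice : ∀ (h : G) (y : Y) (x : X),
      ξ (h, x, y) = ({x' : X | f (x', y) = h}).indicator (fun _ => (1 : ℝ)) x := by
    intro h y x
    show D.indicator (fun _ => (1 : ℝ)) (h, x, y) = _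
    by_cases hx : f (x, y) = h
    · rw [Set.indicator_of_mem (show (h, x, y) ∈ D from hx),
        Set.indicator_of_mem (show x ∈ {x' : X | f (x', y) = h} from hx)]
    · rw [Set.indicator_of_notMem (show (h, x, y) ∉ D from hx),
        Set.indicator_of_notMem (show x ∉ {x' : X | f (x', y) = h} from hx)]
  -- inner integral for ζ
  have hinner : ∀ (h : G) (y : Y),
      (∫⁻ x, ((‖ζ (h, x, y)‖₊ : ℝ≥0∞)) ^ 2 ∂μ) = A h y * (1 - A h y) := by
    intro h y
    set s : Set X := {x' : X | f (x', y) = h} with hsdef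
    have hs : MeasurableSet s := hslice h y
    set c : ℝ := (A h y).toReal with hcdef
    have hc0 : 0 ≤ c := ENNReal.toReal_nonneg
    have hc1 : c ≤ 1 := by
      have := ENNReal.toReal_mono (by norm_num) (hAle h y)
      simpa using this
    have hval : ∀ x : X, ζ (h, x, y) = s.indicator (fun _ => (1 : ℝ)) x - c := by
      intro x
      show ξ (h, x, y) - η (h, x, y) = _
      rw [hξslice h y x]
    have hμsA : μ s = A h y := rfl
    have hAc : A h y = ENNReal.ofReal c := (ENNReal.ofReal_toReal (hAne h y)).symm
    have h1A : (1 : ℝ≥0∞) - A h y = ENNReal.ofReal (1 - c) := by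
      rw [hAc, ← ENNReal.ofReal_one, ← ENNReal.ofReal_sub 1 hc0]
    calc ∫⁻ x, ((‖ζ (h, x, y)‖₊ : ℝ≥0∞)) ^ 2 ∂μ
        = (∫⁻ x in s, ((‖ζ (h, x, y)‖₊ : ℝ≥0∞)) ^ 2 ∂μ)
          + ∫⁻ x in sᶜ, ((‖ζ (h, x, y)‖₊ : ℝ≥0∞)) ^ 2 ∂μ := (lintegral_add_compl _ hs).symm
      _ = ENNReal.ofReal ((1 - c) ^ 2) * μ s + ENNReal.ofReal ((0 - c) ^ 2) * μ sᶜ := by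
          congr 1
          · have hcong : ∀ x ∈ s, ((‖ζ (h, x, y)‖₊ : ℝ≥0∞)) ^ 2
                = ENNReal.ofReal ((1 - c) ^ 2) := by
              intro x hx
              rw [hval x, Set.indicator_of_mem hx, hsq]
            rw [setLIntegral_congr_fun hs hcong,
              setLIntegral_const]
          · have hcong : ∀ x ∈ sᶜ, ((‖ζ (h, x, y)‖₊ : ℝ≥0∞)) ^ 2
                = ENNReal.ofReal ((0 - c) ^ 2) := by
              intro x hx
              rw [hval x, Set.indicator_of_notMem hx, hsq]
            rw [setLIntegral_congr_fun hs.compl hcong,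
              setLIntegral_const]
      _ = A h y * (1 - A h y) := by
          rw [hμsA, prob_compl_eq_one_sub hs, hμsA, h1A, hAc,
            ← ENNReal.ofReal_mul (by positivity), ← ENNReal.ofReal_mul (by positivity),
            ← ENNReal.ofReal_mul hc0, ← ENNReal.ofReal_add (by positivity)
              (mul_nonneg (by positivity) (by linarith))]
          congr 1
          ring
  -- the L² norm of ζ
  set T : Y → ℝ≥0∞ := fun y => ∑' h : G, A h y * (1 - A h y) with hTdef
  have hTmeas : Measurable T :=
    Measurable.ennreal_tsum fun h => (hAmeas h).mul (measurable_const.sub (hAmeas h))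
  have hNζ : (∫⁻ p, ((‖ζ p‖₊ : ℝ≥0∞)) ^ 2 ∂ν) = ∫⁻ y, T y ∂ν₀ := by
    rw [hNsplit ζ hζmeas]
    simp_rw [hinner]
    exact (lintegral_tsum fun h => (((hAmeas h).mul (measurable_const.sub (hAmeas h))).aemeasurable :
      AEMeasurable (fun y => A h y * (1 - A h y)) ν₀)).symm
  have hTle : ∀ y, T y ≤ 1 := by
    intro y
    calc T y ≤ ∑' h : G, A h y * 1 := ENNReal.tsum_le_tsum fun h => mul_le_mul_right tsub_le_self _
      _ = 1 := by
          simp_rw [mul_one]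
          exact hAsum y
  have hζfin : (∫⁻ p, ((‖ζ p‖₊ : ℝ≥0∞)) ^ 2 ∂ν) ≤ 1 := by
    rw [hNζ]
    calc ∫⁻ y, T y ∂ν₀ ≤ ∫⁻ _, 1 ∂ν₀ := lintegral_mono hTle
      _ = 1 := by simp
  have hMem : MemLp ζ 2 (nuG G (μ.prod ν₀)) := by
    refine ⟨hζmeas.aestronglyMeasurable, ?_⟩
    rw [← hνdef, heLp ζ]
    exact ENNReal.rpow_lt_top_of_nonneg (by norm_num)
      (lt_of_le_of_lt hζfin ENNReal.one_lt_top).ne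
  have hzero : ∀ h : G, ∀ᵐ y ∂ν₀, ∫ x, ζ (h, x, y) ∂μ = 0 := by
    intro h
    refine Filter.Eventually.of_forall fun y => ?_
    have hs : MeasurableSet {x' : X | f (x', y) = h} := hslice h y
    have hζy : ∀ x : X, ζ (h, x, y)
        = ({x' : X | f (x', y) = h}).indicator (fun _ => (1 : ℝ)) x - (A h y).toReal := by
      intro x
      show ξ (h, x, y) - η (h, x, y) = _
      rw [hξslice h y x]
    rw [integral_congr_ae (Filter.Eventually.of_forall hζy),
      integral_sub ((integrable_const (1 : ℝ)).indicator hs) (integrable_const _),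
      integral_indicator_const (1 : ℝ) hs, integral_const]
    try simp
    exact sub_self _
  obtain ⟨g, hgS, hgbound⟩ := hgap ζ hMem hzero
  -- diagonal action is measurable / measure preserving
  have hsmulM : ∀ k : G, Measurable fun z : X × Y => k • z := by
    intro k
    have : (fun z : X × Y => k • z) = fun z : X × Y => ((k • z.1, k • z.2) : X × Y) := rfl
    rw [this]
    exact ((hmpX k).measurable.comp measurable_fst).prodMk
      ((hmpY k).measurable.comp measurable_snd)
  have hσ : ∀ k : G, MeasurePreserving (fun z : X × Y => k • z) (μ.prod ν₀) (μ.prod ν₀) := by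
    intro k
    have : (fun z : X × Y => k • z) = Prod.map (fun x : X => k • x) (fun y : Y => k • y) := rfl
    rw [this]
    exact (hmpX k).prod (hmpY k)
  -- the translated difference functions
  set τ : G × X × Y → G × X × Y := fun p => (g⁻¹ * p.1 * g, g⁻¹ • p.2) with hτdef
  have hτmeas : Measurable τ := by
    have h1 : Measurable fun p : G × X × Y => g⁻¹ * p.1 * g :=
      (measurable_of_countable fun c : G => g⁻¹ * c * g).comp measurable_fst
    have h2 : Measurable fun p : G × X × Y => g⁻¹ • p.2 :=
      (hsmulM g⁻¹).comp measurable_snd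
    exact h1.prodMk h2
  set ψ : G × X × Y → ℝ := fun p => ξ (τ p) - ξ p with hψdef
  set χ : G × X × Y → ℝ := fun p => η (τ p) - η p with hχdef
  have hψmeas : Measurable ψ := (hξmeas.comp hτmeas).sub hξmeas
  have hχmeas : Measurable χ := (hηmeas.comp hτmeas).sub hηmeas
  have hξ01 : ∀ p : G × X × Y, ξ p = 0 ∨ ξ p = 1 := by
    intro p
    show D.indicator _ p = 0 ∨ D.indicator _ p = 1
    by_cases hp : p ∈ D
    · right; rw [Set.indicator_of_mem hp]
    · left; rw [Set.indicator_of_notMem hp]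
  have hψcases : ∀ p : G × X × Y, ψ p = 0 ∨ ψ p = 1 ∨ ψ p = -1 := by
    intro p
    have h1 := hξ01 (τ p); have h2 := hξ01 p
    show ξ (τ p) - ξ p = 0 ∨ ξ (τ p) - ξ p = 1 ∨ ξ (τ p) - ξ p = -1
    rcases h1 with h1 | h1 <;> rcases h2 with h2 | h2 <;> rw [h1, h2] <;> norm_num
  have hψnorm : ∀ p : G × X × Y, ((‖ψ p‖₊ : ℝ≥0∞)) = 0 ∨ ((‖ψ p‖₊ : ℝ≥0∞)) = 1 := by
    intro p
    rcases hψcases p with h | h | h <;> rw [h] <;> simp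
  have hψsq : ∀ p, ((‖ψ p‖₊ : ℝ≥0∞)) ^ 2 = ((‖ψ p‖₊ : ℝ≥0∞)) := by
    intro p; rcases hψnorm p with h | h <;> rw [h] <;> norm_num
  have hψle1 : ∀ p, ((‖ψ p‖₊ : ℝ≥0∞)) ≤ 1 := by
    intro p; rcases hψnorm p with h | h <;> rw [h] <;> norm_num
  -- the defect set
  set u : X × Y → G := fun z => g * f (g⁻¹ • z) * g⁻¹ with hudef
  set U : Set (X × Y) := {z | u z ≠ f z} with hUdef
  have humeas : Measurable u := by
    have h1 : Measurable fun z : X × Y => f (g⁻¹ • z) := hf.comp (hsmulM g⁻¹)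
    exact (measurable_of_countable fun c : G => g * c * g⁻¹).comp h1
  have hUmeas : MeasurableSet U := by
    have : U = (fun z => (u z, f z)) ⁻¹' {q : G × G | q.1 ≠ q.2} := rfl
    rw [this]
    exact (humeas.prodMk hf) (hGGset _)
  have hmemτ : ∀ (h : G) (z : X × Y), (f (g⁻¹ • z) = g⁻¹ * h * g) ↔ u z = h := by
    intro h z
    constructor
    · intro hh
      show g * f (g⁻¹ • z) * g⁻¹ = h
      rw [hh]
      group
    · intro hh
      rw [← hh]
      show f (g⁻¹ • z) = g⁻¹ * (g * f (g⁻¹ • z) * g⁻¹) * g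
      group
  have hξτ : ∀ (h : G) (z : X × Y),
      ξ (τ (h, z)) = ({h' : G | u z = h'}).indicator (fun _ => (1 : ℝ)) h := by
    intro h z
    show D.indicator (fun _ => (1 : ℝ)) (τ (h, z)) = _
    by_cases hu : u z = h
    · rw [Set.indicator_of_mem (show τ (h, z) ∈ D from (hmemτ h z).mpr hu),
        Set.indicator_of_mem (show h ∈ {h' : G | u z = h'} from hu)]
    · rw [Set.indicator_of_notMem (show τ (h, z) ∉ D from fun hc => hu ((hmemτ h z).mp hc)),
        Set.indicator_of_notMem (show h ∉ {h' : G | u z = h'} from hu)]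
  have hξp : ∀ (h : G) (z : X × Y),
      ξ (h, z) = ({h' : G | f z = h'}).indicator (fun _ => (1 : ℝ)) h := by
    intro h z
    show D.indicator (fun _ => (1 : ℝ)) (h, z) = _
    by_cases hh : f z = h
    · rw [Set.indicator_of_mem (show (h, z) ∈ D from hh),
        Set.indicator_of_mem (show h ∈ {h' : G | f z = h'} from hh)]
    · rw [Set.indicator_of_notMem (show (h, z) ∉ D from hh),
        Set.indicator_of_notMem (show h ∉ {h' : G | f z = h'} from hh)]
  have htsum : ∀ z : X × Y,
      (∑' h : G, ((‖ψ (h, z)‖₊ : ℝ≥0∞)) ^ 2) = U.indicator (fun _ => (2 : ℝ≥0∞)) z := by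
    intro z
    by_cases hz : u z = f z
    · have hz0 : ∀ h : G, ((‖ψ (h, z)‖₊ : ℝ≥0∞)) ^ 2 = 0 := by
        intro h
        have : ψ (h, z) = 0 := by
          show ξ (τ (h, z)) - ξ (h, z) = 0
          rw [hξτ h z, hξp h z, hz]
          ring
        rw [this]; simp
      rw [Set.indicator_of_notMem (show z ∉ U from fun hc => hc hz)]
      simp_rw [hz0]
      exact tsum_zero
    · have hkey : ∀ h : G, ((‖ψ (h, z)‖₊ : ℝ≥0∞)) ^ 2
          = ({u z} : Set G).indicator (fun _ => (1 : ℝ≥0∞)) h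
            + ({f z} : Set G).indicator (fun _ => (1 : ℝ≥0∞)) h := by
        intro h
        have hpsi : ψ (h, z) = ({h' : G | u z = h'}).indicator (fun _ => (1 : ℝ)) h
            - ({h' : G | f z = h'}).indicator (fun _ => (1 : ℝ)) h := by
          show ξ (τ (h, z)) - ξ (h, z) = _
          rw [hξτ h z, hξp h z]
        by_cases h1 : u z = h <;> by_cases h2 : f z = h
        · exact absurd (h1.trans h2.symm) hz
        · rw [hpsi, Set.indicator_of_mem (show h ∈ {h' : G | u z = h'} from h1),
            Set.indicator_of_notMem (show h ∉ {h' : G | f z = h'} from h2),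
            Set.indicator_of_mem (show h ∈ ({u z} : Set G) from h1.symm),
            Set.indicator_of_notMem
              (show h ∉ ({f z} : Set G) from fun hc => h2 (Set.mem_singleton_iff.mp hc).symm)]
          norm_num
        · rw [hpsi, Set.indicator_of_notMem (show h ∉ {h' : G | u z = h'} from h1),
            Set.indicator_of_mem (show h ∈ {h' : G | f z = h'} from h2),
            Set.indicator_of_notMem
              (show h ∉ ({u z} : Set G) from fun hc => h1 (Set.mem_singleton_iff.mp hc).symm),
            Set.indicator_of_mem (show h ∈ ({f z} : Set G) from h2.symm)]
          norm_num
        · rw [hpsi, Set.indicator_of_notMem (show h ∉ {h' : G | u z = h'} from h1),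
            Set.indicator_of_notMem (show h ∉ {h' : G | f z = h'} from h2),
            Set.indicator_of_notMem
              (show h ∉ ({u z} : Set G) from fun hc => h1 (Set.mem_singleton_iff.mp hc).symm),
            Set.indicator_of_notMem
              (show h ∉ ({f z} : Set G) from fun hc => h2 (Set.mem_singleton_iff.mp hc).symm)]
          norm_num
      simp_rw [hkey]
      rw [Summable.tsum_add ENNReal.summable ENNReal.summable,
        tsum_eq_single (u z) (fun h' hne => Set.indicator_of_notMem (by simp [hne]) _),
        tsum_eq_single (f z) (fun h' hne => Set.indicator_of_notMem (by simp [hne]) _),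
        Set.indicator_of_mem (show u z ∈ ({u z} : Set G) from rfl),
        Set.indicator_of_mem (show f z ∈ ({f z} : Set G) from rfl),
        Set.indicator_of_mem (show z ∈ U from hz)]
      norm_num
  have hNψ : (∫⁻ p, ((‖ψ p‖₊ : ℝ≥0∞)) ^ 2 ∂ν) = 2 * (μ.prod ν₀) U := by
    have haem : ∀ h : G,
        AEMeasurable (fun z : X × Y => ((‖ψ (h, z)‖₊ : ℝ≥0∞)) ^ 2) (μ.prod ν₀) := by
      intro h
      have h1 : Measurable fun z : X × Y => ψ (h, z) := hψmeas.comp measurable_prodMk_left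
      exact ((h1.nnnorm.coe_nnreal_ennreal).pow_const 2).aemeasurable
    rw [hNsplit2 ψ hψmeas, ← lintegral_tsum haem, lintegral_congr htsum,
      lintegral_indicator hUmeas, setLIntegral_const]
  -- the defect set is small
  have hEmeas : MeasurableSet {z : X × Y | f (g • z) = g * f z * g⁻¹} := by
    have h1 : Measurable fun z : X × Y => f (g • z) := hf.comp (hsmulM g)
    have h2 : Measurable fun z : X × Y => g * f z * g⁻¹ :=
      (measurable_of_countable fun c : G => g * c * g⁻¹).comp hf
    have h3 : {z : X × Y | f (g • z) = g * f z * g⁻¹}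
        = (fun z : X × Y => (f (g • z), g * f z * g⁻¹)) ⁻¹' {q : G × G | q.1 = q.2} := rfl
    rw [h3]
    exact (h1.prodMk h2) (hGGset {q : G × G | q.1 = q.2})
  have hpre : (fun z : X × Y => g • z) ⁻¹' Uᶜ
      = {z : X × Y | f (g • z) = g * f z * g⁻¹} := by
    ext z
    simp only [Set.mem_preimage, Set.mem_compl_iff, hUdef, Set.mem_setOf_eq, not_not]
    rw [hudef]
    simp only [inv_smul_smul]
    exact ⟨fun hh => hh.symm, fun hh => hh.symm⟩
  have hUc : (μ.prod ν₀) Uᶜ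
      = (μ.prod ν₀) {z : X × Y | f (g • z) = g * f z * g⁻¹} := by
    rw [← hpre]
    exact ((hσ g).measure_preimage hUmeas.compl.nullMeasurableSet).symm
  have hUlt : (μ.prod ν₀) U < ENNReal.ofReal δ := by
    rw [ENNReal.lt_ofReal_iff_toReal_lt (measure_ne_top _ _)]
    have h2 := hcomm g hgS
    have h3 : (μ.prod ν₀) U = 1 - (μ.prod ν₀) Uᶜ := by
      nth_rewrite 1 [← compl_compl U]
      exact prob_compl_eq_one_sub hUmeas.compl
    rw [h3, hUc, ENNReal.toReal_sub_of_le prob_le_one ENNReal.one_ne_top]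
    simp only [ENNReal.toReal_one]
    linarith
  have hNψδ : (∫⁻ p, ((‖ψ p‖₊ : ℝ≥0∞)) ^ 2 ∂ν) ≤ 2 * ENNReal.ofReal δ := by
    rw [hNψ]
    exact mul_le_mul_right hUlt.le 2
  -- the averaged difference χ is dominated by ψ
  have hχint : ∀ (h : G) (x : X) (y : Y), χ (h, x, y) = ∫ x', ψ (h, x', y) ∂μ := by
    intro h x y
    have hs := hslice h y
    set s₁ : Set X := {x' : X | f (g⁻¹ • x', g⁻¹ • y) = g⁻¹ * h * g} with hs₁def
    have hs₁eq : s₁ = (fun x' : X => g⁻¹ • x') ⁻¹' {x' : X | f (x', g⁻¹ • y) = g⁻¹ * h * g} := rfl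
    have hs₁meas : MeasurableSet s₁ := by
      rw [hs₁eq]
      exact (hmpX g⁻¹).measurable (hslice (g⁻¹ * h * g) (g⁻¹ • y))
    have hμs₁ : μ s₁ = A (g⁻¹ * h * g) (g⁻¹ • y) := by
      rw [hs₁eq]
      exact (hmpX g⁻¹).measure_preimage (hslice (g⁻¹ * h * g) (g⁻¹ • y)).nullMeasurableSet
    have hψx : ∀ x' : X, ψ (h, x', y)
        = s₁.indicator (fun _ => (1 : ℝ)) x'
          - ({x'' : X | f (x'', y) = h}).indicator (fun _ => (1 : ℝ)) x' := by
      intro x'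
      have e1 : ξ (τ (h, x', y)) = s₁.indicator (fun _ => (1 : ℝ)) x' := by
        show D.indicator (fun _ => (1 : ℝ)) (τ (h, x', y)) = _
        by_cases hx' : f (g⁻¹ • x', g⁻¹ • y) = g⁻¹ * h * g
        · rw [Set.indicator_of_mem (show τ (h, x', y) ∈ D from hx'),
            Set.indicator_of_mem (show x' ∈ s₁ from hx')]
        · rw [Set.indicator_of_notMem (show τ (h, x', y) ∉ D from hx'),
            Set.indicator_of_notMem (show x' ∉ s₁ from hx')]
      show ξ (τ (h, x', y)) - ξ (h, x', y) = _
      rw [e1, hξslice h y x']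
    rw [integral_congr_ae (Filter.Eventually.of_forall hψx),
      integral_sub ((integrable_const (1 : ℝ)).indicator hs₁meas)
        ((integrable_const (1 : ℝ)).indicator hs),
      integral_indicator_const (1 : ℝ) hs₁meas, integral_indicator_const (1 : ℝ) hs]
    simp only [smul_eq_mul, mul_one]
    rw [measureReal_def, hμs₁]
    rfl
  have hχle : ∀ p : G × X × Y,
      ((‖χ p‖₊ : ℝ≥0∞)) ≤ ∫⁻ x', ((‖ψ (p.1, x', p.2.2)‖₊ : ℝ≥0∞)) ∂μ := by
    intro p
    rw [show χ p = ∫ x', ψ (p.1, x', p.2.2) ∂μ from hχint p.1 p.2.1 p.2.2]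
    exact enorm_integral_le_lintegral_enorm _
  have hNχ : (∫⁻ p, ((‖χ p‖₊ : ℝ≥0∞)) ^ 2 ∂ν) ≤ ∫⁻ p, ((‖ψ p‖₊ : ℝ≥0∞)) ^ 2 ∂ν := by
    rw [hNsplit χ hχmeas, hNsplit ψ hψmeas]
    refine ENNReal.tsum_le_tsum fun h => lintegral_mono fun y => ?_
    set B : ℝ≥0∞ := ∫⁻ x', ((‖ψ (h, x', y)‖₊ : ℝ≥0∞)) ∂μ with hBdef
    have hB1 : B ≤ 1 := by
      calc B ≤ ∫⁻ _, 1 ∂μ := lintegral_mono fun x' => hψle1 _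
        _ = 1 := by simp
    calc ∫⁻ x, ((‖χ (h, x, y)‖₊ : ℝ≥0∞)) ^ 2 ∂μ
        ≤ ∫⁻ _, B ^ 2 ∂μ := lintegral_mono fun x => pow_le_pow_left' (hχle (h, x, y)) 2
      _ = B ^ 2 := by simp
      _ ≤ B := by
          rw [pow_two]
          calc B * B ≤ 1 * B := mul_le_mul_left hB1 B
            _ = B := one_mul B
      _ = ∫⁻ x, ((‖ψ (h, x, y)‖₊ : ℝ≥0∞)) ^ 2 ∂μ := lintegral_congr fun x' => (hψsq _).symm
  -- triangle inequality and the spectral gap estimate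
  have hζτ : (fun p : G × X × Y => ζ (g⁻¹ * p.1 * g, g⁻¹ • p.2) - ζ p)
      = fun p => ψ p - χ p := by
    funext p
    show ζ (τ p) - ζ p = ψ p - χ p
    show (ξ (τ p) - η (τ p)) - (ξ p - η p) = (ξ (τ p) - ξ p) - (η (τ p) - η p)
    ring
  have htri : eLpNorm (fun p : G × X × Y => ζ (g⁻¹ * p.1 * g, g⁻¹ • p.2) - ζ p) 2 ν
      ≤ eLpNorm ψ 2 ν + eLpNorm χ 2 ν := by
    rw [hζτ]
    exact eLpNorm_sub_le hψmeas.aestronglyMeasurable hχmeas.aestronglyMeasurable one_le_two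
  have hrtsq : ∀ x : ℝ≥0∞, (x ^ (1 / 2 : ℝ)) ^ 2 = x := by
    intro x
    rw [← ENNReal.rpow_natCast (x ^ (1 / 2 : ℝ)) 2, ← ENNReal.rpow_mul]
    norm_num
  have hκN : ENNReal.ofReal κ * (∫⁻ p, ((‖ζ p‖₊ : ℝ≥0∞)) ^ 2 ∂ν) ^ (1 / 2 : ℝ)
      ≤ 2 * (2 * ENNReal.ofReal δ) ^ (1 / 2 : ℝ) := by
    calc ENNReal.ofReal κ * (∫⁻ p, ((‖ζ p‖₊ : ℝ≥0∞)) ^ 2 ∂ν) ^ (1 / 2 : ℝ)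
        = ENNReal.ofReal κ * eLpNorm ζ 2 ν := by rw [heLp ζ]
      _ ≤ eLpNorm (fun p : G × X × Y => ζ (g⁻¹ * p.1 * g, g⁻¹ • p.2) - ζ p) 2 ν := hgbound
      _ ≤ eLpNorm ψ 2 ν + eLpNorm χ 2 ν := htri
      _ ≤ (2 * ENNReal.ofReal δ) ^ (1 / 2 : ℝ) + (2 * ENNReal.ofReal δ) ^ (1 / 2 : ℝ) := by
          gcongr
          · rw [heLp ψ]
            exact ENNReal.rpow_le_rpow hNψδ (by norm_num)
          · rw [heLp χ]
            exact ENNReal.rpow_le_rpow (le_trans hNχ hNψδ) (by norm_num)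
      _ = 2 * (2 * ENNReal.ofReal δ) ^ (1 / 2 : ℝ) := (two_mul _).symm
  have hNT : (∫⁻ y, T y ∂ν₀) ≤ ENNReal.ofReal (ε' ^ 2 / 2) := by
    have h1 := pow_le_pow_left' hκN 2
    rw [mul_pow, mul_pow, hrtsq, hrtsq, hNζ] at h1
    have hsq2 : ENNReal.ofReal (κ ^ 2) * (∫⁻ y, T y ∂ν₀) ≤ ENNReal.ofReal (8 * δ) := by
      calc ENNReal.ofReal (κ ^ 2) * (∫⁻ y, T y ∂ν₀)
          = ENNReal.ofReal κ ^ 2 * (∫⁻ y, T y ∂ν₀) := by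
            rw [← ENNReal.ofReal_pow hκ.le]
        _ ≤ 2 ^ 2 * (2 * ENNReal.ofReal δ) := h1
        _ = 8 * ENNReal.ofReal δ := by ring
        _ = ENNReal.ofReal (8 * δ) := by
            rw [show (8 : ℝ≥0∞) = ENNReal.ofReal 8 by norm_num,
              ← ENNReal.ofReal_mul (by norm_num)]
    have h2 : (∫⁻ y, T y ∂ν₀) ≤ ENNReal.ofReal (8 * δ) / ENNReal.ofReal (κ ^ 2) := by
      rw [ENNReal.le_div_iff_mul_le
        (Or.inl (ENNReal.ofReal_pos.mpr (by positivity)).ne') (Or.inl ENNReal.ofReal_ne_top)]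
      rw [mul_comm]
      exact hsq2
    calc (∫⁻ y, T y ∂ν₀) ≤ ENNReal.ofReal (8 * δ) / ENNReal.ofReal (κ ^ 2) := h2
      _ = ENNReal.ofReal (8 * δ / κ ^ 2) := (ENNReal.ofReal_div_of_pos (by positivity)).symm
      _ = ENNReal.ofReal (ε' ^ 2 / 2) := by
          congr 1
          rw [hδdef]
          field_simp
          ring
  -- Markov inequality: most fibers are nearly concentrated
  have hbad : ν₀ {y | ENNReal.ofReal ε' ≤ T y} ≤ ENNReal.ofReal (ε' / 2) := by
    have h1 := mul_meas_ge_le_lintegral₀ (μ := ν₀) hTmeas.aemeasurable (ENNReal.ofReal ε')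
    have h2 : ν₀ {y | ENNReal.ofReal ε' ≤ T y}
        ≤ ENNReal.ofReal (ε' ^ 2 / 2) / ENNReal.ofReal ε' := by
      rw [ENNReal.le_div_iff_mul_le (Or.inl (ENNReal.ofReal_pos.mpr hε'pos).ne')
        (Or.inl ENNReal.ofReal_ne_top), mul_comm]
      exact le_trans h1 hNT
    calc ν₀ {y | ENNReal.ofReal ε' ≤ T y}
        ≤ ENNReal.ofReal (ε' ^ 2 / 2) / ENNReal.ofReal ε' := h2
      _ = ENNReal.ofReal (ε' ^ 2 / 2 / ε') := (ENNReal.ofReal_div_of_pos hε'pos).symm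
      _ = ENNReal.ofReal (ε' / 2) := by
          congr 1
          field_simp
  have hGoodMeas : MeasurableSet {y | T y < ENNReal.ofReal ε'} :=
    measurableSet_lt hTmeas measurable_const
  have hgoodμ : ENNReal.ofReal (1 - ε') < ν₀ {y | T y < ENNReal.ofReal ε'} := by
    have hc : {y | T y < ENNReal.ofReal ε'}ᶜ = {y | ENNReal.ofReal ε' ≤ T y} := by
      ext y
      simp [not_lt]
    have h1 : ν₀ {y | T y < ENNReal.ofReal ε'}
        = 1 - ν₀ {y | ENNReal.ofReal ε' ≤ T y} := by
      rw [← hc]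
      nth_rewrite 1 [← compl_compl {y | T y < ENNReal.ofReal ε'}]
      exact prob_compl_eq_one_sub hGoodMeas.compl
    rw [h1]
    calc ENNReal.ofReal (1 - ε') < ENNReal.ofReal (1 - ε' / 2) := by
          rw [ENNReal.ofReal_lt_ofReal_iff (by linarith)]
          linarith
      _ = 1 - ENNReal.ofReal (ε' / 2) := by
          rw [← ENNReal.ofReal_one, ← ENNReal.ofReal_sub 1 (by positivity)]
      _ ≤ 1 - ν₀ {y | ENNReal.ofReal ε' ≤ T y} := tsub_le_tsub_left hbad 1
  -- the nearly-constant pieces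
  set Z : G → Set Y := fun h => {y | ENNReal.ofReal (1 - ε') < A h y} with hZdef
  have hZmeas : ∀ h, MeasurableSet (Z h) :=
    fun h => measurableSet_lt measurable_const (hAmeas h)
  have hZdisj : Pairwise (Function.onFun Disjoint Z) := by
    intro h h' hne
    refine Set.disjoint_left.mpr fun y hy hy' => ?_
    have h1 : A h y + A h' y ≤ 1 := by
      have hd : Disjoint {x : X | f (x, y) = h} {x : X | f (x, y) = h'} :=
        Set.disjoint_left.mpr fun x hx hx' => hne (hx.symm.trans hx')
      calc A h y + A h' y = μ ({x : X | f (x, y) = h} ∪ {x : X | f (x, y) = h'}) :=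
            (measure_union hd (hslice h' y)).symm
        _ ≤ 1 := prob_le_one
    have h2 : (1 : ℝ≥0∞) < A h y + A h' y := by
      calc (1 : ℝ≥0∞) = ENNReal.ofReal 1 := ENNReal.ofReal_one.symm
        _ ≤ ENNReal.ofReal ((1 - ε') + (1 - ε')) := by
            rw [ENNReal.ofReal_le_ofReal_iff (by linarith)]
            linarith
        _ = ENNReal.ofReal (1 - ε') + ENNReal.ofReal (1 - ε') :=
            ENNReal.ofReal_add (by linarith) (by linarith)
        _ < A h y + A h' y := ENNReal.add_lt_add hy hy'
    exact absurd (lt_of_lt_of_le h2 h1) (lt_irrefl _)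
  have hone : (1 : ℝ≥0∞) - ENNReal.ofReal (1 - ε') = ENNReal.ofReal ε' := by
    rw [← ENNReal.ofReal_one, ← ENNReal.ofReal_sub 1 (by linarith)]
    congr 1
    ring
  have hcover : {y | T y < ENNReal.ofReal ε'} ⊆ ⋃ h : G, Z h := by
    intro y hy
    by_contra hnot
    have hA' : ∀ h : G, A h y ≤ ENNReal.ofReal (1 - ε') := by
      intro h
      by_contra hlt
      exact hnot (Set.mem_iUnion.mpr ⟨h, not_le.mp hlt⟩)
    have h1 : ∀ h : G, ENNReal.ofReal ε' ≤ 1 - A h y := by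
      intro h
      calc ENNReal.ofReal ε' = 1 - ENNReal.ofReal (1 - ε') := hone.symm
        _ ≤ 1 - A h y := tsub_le_tsub_left (hA' h) 1
    have h2 : ENNReal.ofReal ε' ≤ T y := by
      calc ENNReal.ofReal ε' = 1 * ENNReal.ofReal ε' := (one_mul _).symm
        _ = (∑' h : G, A h y) * ENNReal.ofReal ε' := by rw [hAsum y]
        _ = ∑' h : G, A h y * ENNReal.ofReal ε' := ENNReal.tsum_mul_right.symm
        _ ≤ ∑' h : G, A h y * (1 - A h y) :=
            ENNReal.tsum_le_tsum fun h => mul_le_mul_right (h1 h) _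
    exact absurd hy (not_lt.mpr h2)
  have hUnion : ENNReal.ofReal (1 - ε') < ∑' h : G, ν₀ (Z h) := by
    rw [← measure_iUnion hZdisj hZmeas]
    exact lt_of_lt_of_le hgoodμ (measure_mono hcover)
  obtain ⟨F, hF⟩ : ∃ F : Finset G, ENNReal.ofReal (1 - ε') < ∑ h ∈ F, ν₀ (Z h) := by
    rw [ENNReal.tsum_eq_iSup_sum] at hUnion
    exact lt_iSup_iff.mp hUnion
  have hd2 : Pairwise (Function.onFun Disjoint
      fun i : Fin F.card => Z (F.equivFin.symm i : G)) := fun i j hij =>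
    hZdisj fun hc => hij (F.equivFin.symm.injective (Subtype.coe_injective hc))
  refine ⟨⋃ i : Fin F.card, Z (F.equivFin.symm i : G), F.card,
    fun i => Z (F.equivFin.symm i : G), fun i => (F.equivFin.symm i : G),
    MeasurableSet.iUnion fun i => hZmeas _, fun i => hZmeas _, hd2, rfl, ?_, ?_⟩
  · have h1 : ν₀ (⋃ i : Fin F.card, Z (F.equivFin.symm i : G)) = ∑ h ∈ F, ν₀ (Z h) := by
      rw [measure_iUnion hd2 fun i => hZmeas _, tsum_fintype,
        ← Finset.sum_coe_sort F fun h => ν₀ (Z h)]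
      exact (Fintype.sum_equiv F.equivFin (fun a : {x // x ∈ F} => ν₀ (Z (a : G)))
        (fun i => ν₀ (Z (F.equivFin.symm i : G)))
        (fun a => by simp)).symm
    have hne : (∑ h ∈ F, ν₀ (Z h)) ≠ ∞ := by
      rw [← h1]
      exact measure_ne_top ν₀ _
    have hlt := (ENNReal.toReal_lt_toReal ENNReal.ofReal_ne_top hne).mpr hF
    rw [ENNReal.toReal_ofReal (by linarith)] at hlt
    rw [h1]
    linarith
  · intro i
    refine Filter.Eventually.of_forall fun y hy => ?_
    have h1 : ENNReal.ofReal (1 - ε') < A (F.equivFin.symm i : G) y := hy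
    have h2 := (ENNReal.toReal_lt_toReal ENNReal.ofReal_ne_top
      (hAne (F.equivFin.symm i : G) y)).mpr h1
    rw [ENNReal.toReal_ofReal (by linarith)] at h2
    show 1 - ε < (A (F.equivFin.symm i : G) y).toReal
    linarith
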